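/- A compatible mapping T : Z_2 → Z_2 preserves the Haar measure (equivalently, induces a permutation on Z/2^n Z for every n ≥ 1) if and only if for each i ≥ 0 the Boolean function δ_i(T(x)), viewed as a function of the bits χ_0,...,χ_i of x, has the form χ_i + φ_i(χ_0,...,χ_{i-1}) for some Boolean function φ_i in the lower-order bits only. -/

import Mathlib

open scoped BigOperators

/-- The `j`-th binary digit of a 2-adic integer, as an element of `ZMod 2`. -/
noncomputable def bit2 (j : ℕ) (x : ℤ_[2]) : ZMod 2 := ((x.appr (j+1) / 2^j : ℕ) : ZMod 2)

/-- Compatibility = 1-Lipschitz w.r.t. the 2-adic metric. -/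
def Compatible (f : ℤ_[2] → ℤ_[2]) : Prop := ∀ x y : ℤ_[2], ‖f x - f y‖ ≤ ‖x - y‖

/-- Reduction of a 2-adic integer modulo `2^n`. -/
noncomputable def padMod (n : ℕ) (x : ℤ_[2]) : ZMod (2^n) := (x.appr n : ZMod (2^n))

/-- The map induced by `f : ℤ₂ → ℤ₂` on `ZMod (2^n)` (via canonical lifts). -/
noncomputable def inducedMap (n : ℕ) (f : ℤ_[2] → ℤ_[2]) : ZMod (2^n) → ZMod (2^n) :=
  fun a => padMod n (f ((a.val : ℕ) : ℤ_[2]))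

/-- A self-map of a set is a single cycle (transitive on points). -/
def IsSingleCycle {α : Type*} (g : α → α) : Prop := ∀ a b : α, ∃ k : ℕ, g^[k] a = b

/-- Measure preservation: `f` induces a bijection modulo `2^n` for every `n`. -/
def MeasurePreservingZ (f : ℤ_[2] → ℤ_[2]) : Prop := ∀ n : ℕ, Function.Bijective (inducedMap n f)

/-- Ergodicity: `f` induces a single-cycle permutation modulo `2^n` for every `n`. -/
def ErgodicZ (f : ℤ_[2] → ℤ_[2]) : Prop := ∀ n : ℕ, IsSingleCycle (inducedMap n f)

/-- Induced map modulo `2^n` of an `m`-variate map on `(ℤ₂)^m`. -/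
noncomputable def inducedMapM (m n : ℕ) (G : (Fin m → ℤ_[2]) → Fin m → ℤ_[2]) :
    (Fin m → ZMod (2^n)) → Fin m → ZMod (2^n) :=
  fun a j => padMod n (G (fun i => (((a i).val : ℕ) : ℤ_[2])) j)

/-- Coordinatewise compatibility of an `m`-variate map. -/
def CompatibleM (m : ℕ) (G : (Fin m → ℤ_[2]) → Fin m → ℤ_[2]) : Prop :=
  ∀ (n : ℕ) (x y : Fin m → ℤ_[2]), (∀ i, padMod n (x i) = padMod n (y i)) →
    ∀ j, padMod n (G x j) = padMod n (G y j)

/-- Ergodicity of an `m`-variate map: single cycle modulo `2^n` for all `n`. -/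
def ErgodicM (m : ℕ) (G : (Fin m → ℤ_[2]) → Fin m → ℤ_[2]) : Prop :=
  ∀ n : ℕ, IsSingleCycle (inducedMapM m n G)

/-- The 2-adic integer with prescribed binary digits. -/
noncomputable def ofBits (b : ℕ → ZMod 2) : ℤ_[2] := ∑' i : ℕ, ((b i).val : ℤ_[2]) * 2^i

/-- Bitwise XOR of 2-adic integers. -/
noncomputable def xor2 (x y : ℤ_[2]) : ℤ_[2] := ofBits (fun i => bit2 i x + bit2 i y)

/-- Bitwise AND of 2-adic integers. -/
noncomputable def and2 (x y : ℤ_[2]) : ℤ_[2] := ofBits (fun i => bit2 i x * bit2 i y)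

/-- Bitwise AND of a list, the empty AND being `-1` (the all-ones string). -/
noncomputable def andL (l : List ℤ_[2]) : ℤ_[2] := l.foldr and2 (-1)

section AuxLemmas

private lemma padMod_def' (n : ℕ) (x : ℤ_[2]) : padMod n x = PadicInt.toZModPow n x := rfl

private lemma padMod_eq_iff_norm {n : ℕ} {x y : ℤ_[2]} :
    padMod n x = padMod n y ↔ ‖x - y‖ ≤ ((2 : ℕ) : ℝ) ^ (-(n : ℤ)) := by
  rw [padMod_def', padMod_def', ← sub_eq_zero, ← map_sub, ← RingHom.mem_ker,
    PadicInt.ker_toZModPow]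
  exact (PadicInt.norm_le_pow_iff_mem_span_pow (x - y) n).symm

private lemma padMod_eq_iff_appr {n : ℕ} {x y : ℤ_[2]} :
    padMod n x = padMod n y ↔ x.appr n = y.appr n := by
  constructor
  · intro h
    have h2 : ((x.appr n : ℕ) : ZMod (2 ^ n)).val = ((y.appr n : ℕ) : ZMod (2 ^ n)).val := by
      have : padMod n x = padMod n y := h
      unfold padMod at this
      rw [this]
    rwa [ZMod.val_cast_of_lt (x.appr_lt n), ZMod.val_cast_of_lt (y.appr_lt n)] at h2
  · intro h
    unfold padMod
    rw [h]

private lemma appr_mod {m n : ℕ} (h : m ≤ n) (x : ℤ_[2]) : x.appr n % 2 ^ m = x.appr m := by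
  obtain ⟨c, hc⟩ := x.dvd_appr_sub_appr m n h
  have hle : x.appr m ≤ x.appr n := x.appr_mono h
  have hd : x.appr n = x.appr m + 2 ^ m * c := by omega
  rw [hd, Nat.add_mul_mod_self_left, Nat.mod_eq_of_lt (x.appr_lt m)]

private lemma bitdiv_lt (i : ℕ) (x : ℤ_[2]) : x.appr (i + 1) / 2 ^ i < 2 := by
  apply Nat.div_lt_of_lt_mul
  have h := x.appr_lt (i + 1)
  calc x.appr (i + 1) < 2 ^ (i + 1) := h
    _ = 2 ^ i * 2 := by ring

private lemma bit2_eq_iff {i : ℕ} {x y : ℤ_[2]} :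
    bit2 i x = bit2 i y ↔ x.appr (i + 1) / 2 ^ i = y.appr (i + 1) / 2 ^ i := by
  constructor
  · intro h
    have h2 := congrArg ZMod.val h
    unfold bit2 at h2
    rwa [ZMod.val_cast_of_lt (bitdiv_lt i x), ZMod.val_cast_of_lt (bitdiv_lt i y)] at h2
  · intro h
    unfold bit2
    rw [h]

private lemma appr_succ_decomp (i : ℕ) (x : ℤ_[2]) :
    x.appr (i + 1) = 2 ^ i * (x.appr (i + 1) / 2 ^ i) + x.appr i := by
  conv_lhs => rw [← Nat.div_add_mod (x.appr (i + 1)) (2 ^ i)]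
  rw [appr_mod (Nat.le_succ i) x]

private lemma padMod_succ_iff {i : ℕ} {x y : ℤ_[2]} :
    padMod (i + 1) x = padMod (i + 1) y ↔
      (padMod i x = padMod i y ∧ bit2 i x = bit2 i y) := by
  rw [padMod_eq_iff_appr, padMod_eq_iff_appr, bit2_eq_iff]
  constructor
  · intro h
    refine ⟨?_, by rw [h]⟩
    rw [← appr_mod (Nat.le_succ i) x, ← appr_mod (Nat.le_succ i) y, h]
  · rintro ⟨h1, h2⟩
    rw [appr_succ_decomp i x, appr_succ_decomp i y, h1, h2]

private lemma padMod_eq_iff_bits {n : ℕ} {x y : ℤ_[2]} :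
    padMod n x = padMod n y ↔ ∀ i < n, bit2 i x = bit2 i y := by
  induction n with
  | zero =>
    rw [padMod_eq_iff_appr]
    have hx : x.appr 0 = 0 := Nat.lt_one_iff.mp (by simpa using x.appr_lt 0)
    have hy : y.appr 0 = 0 := Nat.lt_one_iff.mp (by simpa using y.appr_lt 0)
    simp [hx, hy]
  | succ k ih =>
    rw [padMod_succ_iff, ih]
    constructor
    · rintro ⟨h1, h2⟩ i hi
      rcases Nat.lt_succ_iff_lt_or_eq.mp hi with h | rfl
      · exact h1 i h
      · exact h2
    · intro h
      exact ⟨fun i hi => h i (hi.trans (Nat.lt_succ_self k)), h k (Nat.lt_succ_self k)⟩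

private lemma padMod_compat {T : ℤ_[2] → ℤ_[2]} (hT : Compatible T) {n : ℕ} {x y : ℤ_[2]}
    (h : padMod n x = padMod n y) : padMod n (T x) = padMod n (T y) := by
  rw [padMod_eq_iff_norm] at h ⊢
  exact le_trans (hT x y) h

private lemma padMod_val (n : ℕ) (a : ZMod (2 ^ n)) :
    padMod n ((a.val : ℕ) : ℤ_[2]) = a := by
  haveI : NeZero ((2 : ℕ) ^ n) := ⟨(pow_pos (by norm_num : (0:ℕ) < 2) n).ne'⟩
  rw [padMod_def', map_natCast, ZMod.natCast_val, ZMod.cast_id]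

private lemma inducedMap_padMod {T : ℤ_[2] → ℤ_[2]} (hT : Compatible T) (n : ℕ) (x : ℤ_[2]) :
    inducedMap n T (padMod n x) = padMod n (T x) := by
  unfold inducedMap
  exact padMod_compat hT (by rw [padMod_val])

private lemma appr_natCast (m n : ℕ) : ((m : ℤ_[2])).appr n = m % 2 ^ n := by
  have h1 : padMod n ((m : ℕ) : ℤ_[2]) = (m : ZMod (2 ^ n)) := by
    rw [padMod_def', map_natCast]
  have h2 := congrArg ZMod.val h1
  unfold padMod at h2
  rwa [ZMod.val_cast_of_lt (PadicInt.appr_lt _ n), ZMod.val_natCast] at h2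

private lemma appr_eq_sum (x : ℤ_[2]) (i : ℕ) :
    x.appr i = ∑ s ∈ Finset.range i, (bit2 s x).val * 2 ^ s := by
  induction i with
  | zero => simpa using Nat.lt_one_iff.mp (by simpa using x.appr_lt 0)
  | succ k ih =>
    rw [Finset.sum_range_succ, ← ih]
    have hv : (bit2 k x).val = x.appr (k + 1) / 2 ^ k := by
      unfold bit2
      rw [ZMod.val_cast_of_lt (bitdiv_lt k x)]
    conv_lhs => rw [appr_succ_decomp k x]
    rw [hv]
    ring

end AuxLemmas

/-- a compatible `T : ℤ₂ → ℤ₂` preserves measure iff for each `i`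
the `i`-th bit of `T x` equals `χ_i + φ_i(χ_0,…,χ_{i-1})` for some Boolean
function `φ_i` of the lower-order bits only. -/
theorem measurePreserving_iff_bit_form (T : ℤ_[2] → ℤ_[2]) (hT : Compatible T) :
    MeasurePreservingZ T ↔
      ∀ i : ℕ, ∃ φ : (Fin i → ZMod 2) → ZMod 2,
        ∀ x : ℤ_[2], bit2 i (T x) = bit2 i x + φ (fun s => bit2 (s : ℕ) x) := by
  constructor
  · -- measure preserving → bit form
    intro hMP i
    refine ⟨fun c => bit2 i (T (((∑ s : Fin i, (c s).val * 2 ^ (s : ℕ)) : ℕ) : ℤ_[2])), ?_⟩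
    intro x
    set N : ℕ := ∑ s : Fin i, (bit2 (s : ℕ) x).val * 2 ^ (s : ℕ) with hN
    have hNx : N = x.appr i := by
      rw [hN, Fin.sum_univ_eq_sum_range (fun m => (bit2 m x).val * 2 ^ m) i, appr_eq_sum x i]
    set y : ℤ_[2] := (N : ℤ_[2]) with hy
    have hNlt : N < 2 ^ i := hNx ▸ x.appr_lt i
    -- padMod i x = padMod i y
    have hpad_i : padMod i x = padMod i y := by
      rw [padMod_eq_iff_appr, hy, appr_natCast, Nat.mod_eq_of_lt hNlt, hNx]
    -- bit2 i y = 0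
    have hbity : bit2 i y = 0 := by
      have hdiv : y.appr (i + 1) / 2 ^ i = 0 := by
        rw [hy, appr_natCast]
        have : N % 2 ^ (i + 1) = N :=
          Nat.mod_eq_of_lt (hNlt.trans (Nat.pow_lt_pow_succ (by norm_num)))
        rw [this]
        exact Nat.div_eq_of_lt hNlt
      unfold bit2
      rw [hdiv]
      simp
    have hcase : bit2 i x = bit2 i y ∨ bit2 i x = bit2 i y + 1 := by
      have : ∀ a b : ZMod 2, a = b ∨ a = b + 1 := by decide
      exact this _ _
    rcases hcase with hc | hc
    · -- same i-th bit: values agree mod 2^(i+1)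
      have hpad : padMod (i + 1) x = padMod (i + 1) y :=
        padMod_succ_iff.mpr ⟨hpad_i, hc⟩
      have hpadT : padMod (i + 1) (T x) = padMod (i + 1) (T y) := padMod_compat hT hpad
      have hbitT : bit2 i (T x) = bit2 i (T y) := (padMod_succ_iff.mp hpadT).2
      rw [hbitT, hc, hbity]
      ring
    · -- differing i-th bit: use injectivity mod 2^(i+1)
      have hne : padMod (i + 1) x ≠ padMod (i + 1) y := by
        intro h
        have h2 := (padMod_succ_iff.mp h).2
        rw [hc] at h2
        have : ∀ b : ZMod 2, b + 1 ≠ b := by decide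
        exact this _ h2
      have hTne : padMod (i + 1) (T x) ≠ padMod (i + 1) (T y) := by
        intro h
        apply hne
        apply (hMP (i + 1)).1
        rw [inducedMap_padMod hT, inducedMap_padMod hT, h]
      have hpadTi : padMod i (T x) = padMod i (T y) := padMod_compat hT hpad_i
      have hbitTne : bit2 i (T x) ≠ bit2 i (T y) := by
        intro h
        exact hTne (padMod_succ_iff.mpr ⟨hpadTi, h⟩)
      have hbitT : bit2 i (T x) = bit2 i (T y) + 1 := by
        have : ∀ a b : ZMod 2, a ≠ b → a = b + 1 := by decide
        exact this _ _ hbitTne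
      rw [hbitT, hc, hbity]
      ring
  · -- bit form → measure preserving
    intro hform n
    haveI : NeZero ((2 : ℕ) ^ n) := ⟨(pow_pos (by norm_num : (0:ℕ) < 2) n).ne'⟩
    rw [← Finite.injective_iff_bijective]
    intro a b hab
    set x : ℤ_[2] := ((a.val : ℕ) : ℤ_[2]) with hx
    set y : ℤ_[2] := ((b.val : ℕ) : ℤ_[2]) with hyy
    have hTxy : padMod n (T x) = padMod n (T y) := hab
    have key : ∀ i, i < n → bit2 i x = bit2 i y := by
      intro i
      induction i using Nat.strong_induction_on with
      | _ i IH =>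
        intro hi
        obtain ⟨φ, hφ⟩ := hform i
        have hc : (fun s : Fin i => bit2 (s : ℕ) x) = fun s : Fin i => bit2 (s : ℕ) y := by
          funext s
          exact IH (s : ℕ) s.2 ((s.2).trans hi)
        have hTbit : bit2 i (T x) = bit2 i (T y) :=
          (padMod_eq_iff_bits.mp hTxy) i hi
        rw [hφ x, hφ y, hc] at hTbit
        exact add_right_cancel hTbit
    have hpad : padMod n x = padMod n y := padMod_eq_iff_bits.mpr key
    calc a = padMod n x := (padMod_val n a).symm
      _ = padMod n y := hpad
      _ = b := padMod_val n b
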